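/- Let M = M_{Q_2} over ℤ[z_1,…,z_{2n-1}] for the word Q_2 = (n, n-1, …, 2, 1, 2, …, n-1, n). Then the determinant of the submatrix of M with rows {1,2,…,n} and columns {2,3,…,n+1} is equal to 1 or -1 (a unit in ℤ[z_1,…,z_{2n-1}]). (The α = 0 case in the proof of Proposition 3: there is exactly one matching of {1,…,n} with {2',…,(n+1)'} and all its edges have weight 1.) -/

import Mathlib

open Matrix MvPolynomial

/-- For `1 ≤ α ≤ n`, the `(2n+2) × (2n+2)` identity matrix modified by replacing the
`2 × 2` diagonal block in rows/columns `{α, α+1}` (1-based) by `[[-z,1],[1,0]]` and the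
`2 × 2` diagonal block in rows/columns `{2n+2-α, 2n+3-α}` by `[[z,1],[1,0]]`; for
`α = 0`, the identity matrix with the central `4 × 4` diagonal block in rows/columns
`{n, n+1, n+2, n+3}` replaced by `[[-z,0,1,0],[0,z,0,1],[1,0,0,0],[0,1,0,0]]`. -/
def gMat {R : Type*} [CommRing R] (n : ℕ) (α : ℕ) (z : R) :
    Matrix (Fin (2 * n + 2)) (Fin (2 * n + 2)) R :=
  Matrix.of fun i j =>
    let i' := (i : ℕ) + 1
    let j' := (j : ℕ) + 1
    if α = 0 then
      if i' = n ∧ j' = n then -z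
      else if i' = n + 1 ∧ j' = n + 1 then z
      else if (i' = n ∧ j' = n + 2) ∨ (i' = n + 1 ∧ j' = n + 3) ∨
              (i' = n + 2 ∧ j' = n) ∨ (i' = n + 3 ∧ j' = n + 1) then 1
      else if i' = j' ∧ ¬(i' = n ∨ i' = n + 1 ∨ i' = n + 2 ∨ i' = n + 3) then 1
      else 0
    else
      if i' = α ∧ j' = α then -z
      else if i' = 2 * n + 2 - α ∧ j' = 2 * n + 2 - α then z
      else if (i' = α ∧ j' = α + 1) ∨ (i' = α + 1 ∧ j' = α) ∨
              (i' = 2 * n + 2 - α ∧ j' = 2 * n + 3 - α) ∨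
              (i' = 2 * n + 3 - α ∧ j' = 2 * n + 2 - α) then 1
      else if i' = j' ∧
          ¬(i' = α ∨ i' = α + 1 ∨ i' = 2 * n + 2 - α ∨ i' = 2 * n + 3 - α) then 1
      else 0

/-- The descending word `(a, a-1, …, b)`. -/
def descWord (a b : ℕ) : List ℕ := (List.range (a + 1 - b)).reverse.map (· + b)

/-- The ascending word `(a, a+1, …, b)`. -/
def ascWord (a b : ℕ) : List ℕ := (List.range (b + 1 - a)).map (· + a)

/-- `Q_1 = (0, n-1, n-2, …, 2, 1, 2, 3, …, n-1, 0)`. -/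
def wordQ1 (n : ℕ) : List ℕ := 0 :: (descWord (n - 1) 1 ++ ascWord 2 (n - 1) ++ [0])

/-- `Q_2 = (n, n-1, …, 2, 1, 2, …, n-1, n)`. -/
def wordQ2 (n : ℕ) : List ℕ := descWord n 1 ++ ascWord 2 n

/-- `Q^{(i)} = (i, i-1, …, 1, 2, 3, …, n-1, 0, n, n-1, …, i+1)`. -/
def wordQi (n i : ℕ) : List ℕ :=
  descWord i 1 ++ ascWord 2 (n - 1) ++ [0] ++ descWord n (i + 1)

/-- `M_Q = g_{α_1}(z_1) · g_{α_2}(z_2) ⋯ g_{α_L}(z_L)` over `ℤ[z_1, z_2, …]`,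
where `z_j` is the variable `X j`. -/
noncomputable def MQ (n : ℕ) (Q : List ℕ) :
    Matrix (Fin (2 * n + 2)) (Fin (2 * n + 2)) (MvPolynomial ℕ ℤ) :=
  (List.ofFn (fun l : Fin Q.length => gMat n (Q.get l) (X ((l : ℕ) + 1)))).prod

/-- The determinant of the northwest `α × α` submatrix. -/
noncomputable def nwDet {n : ℕ}
    (M : Matrix (Fin (2 * n + 2)) (Fin (2 * n + 2)) (MvPolynomial ℕ ℤ))
    (α : ℕ) (h : α ≤ 2 * n + 2) : MvPolynomial ℕ ℤ :=
  (M.submatrix (Fin.castLE h) (Fin.castLE h)).det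

set_option maxHeartbeats 1000000


section Aux

variable {R : Type*} [CommRing R]

lemma gMat_apply_pos (n α : ℕ) (hα : α ≠ 0) (z : R) (i j : Fin (2 * n + 2)) :
    gMat n α z i j =
      if (i : ℕ) + 1 = α ∧ (j : ℕ) + 1 = α then -z
      else if (i : ℕ) + 1 = 2 * n + 2 - α ∧ (j : ℕ) + 1 = 2 * n + 2 - α then z
      else if ((i : ℕ) + 1 = α ∧ (j : ℕ) + 1 = α + 1) ∨ ((i : ℕ) + 1 = α + 1 ∧ (j : ℕ) + 1 = α) ∨
              ((i : ℕ) + 1 = 2 * n + 2 - α ∧ (j : ℕ) + 1 = 2 * n + 3 - α) ∨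
              ((i : ℕ) + 1 = 2 * n + 3 - α ∧ (j : ℕ) + 1 = 2 * n + 2 - α) then 1
      else if (i : ℕ) + 1 = (j : ℕ) + 1 ∧
          ¬((i : ℕ) + 1 = α ∨ (i : ℕ) + 1 = α + 1 ∨ (i : ℕ) + 1 = 2 * n + 2 - α ∨
            (i : ℕ) + 1 = 2 * n + 3 - α) then 1
      else 0 := by
  simp only [gMat, Matrix.of_apply, if_neg hα]

lemma sum_ind_two {N : ℕ} (a b : Fin N) (f g : Fin N → R) :
    (∑ m, ((if m = a then f m else 0) + (if m = b then g m else 0))) = f a + g b := by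
  rw [Finset.sum_add_distrib, Finset.sum_ite_eq', Finset.sum_ite_eq']
  simp

lemma sum_ind_one {N : ℕ} (a : Fin N) (f : Fin N → R) :
    (∑ m, (if m = a then f m else 0)) = f a := by
  rw [Finset.sum_ite_eq']; simp


lemma vecMul_gMat {n α : ℕ} (hα1 : 1 ≤ α) (hα2 : α ≤ n) (z : R)
    (v : Fin (2 * n + 2) → R) (j : Fin (2 * n + 2)) :
    (v ᵥ* gMat n α z) j =
      if (j : ℕ) + 1 = α then -z * v ⟨α - 1, by omega⟩ + v ⟨α, by omega⟩
      else if (j : ℕ) + 1 = α + 1 then v ⟨α - 1, by omega⟩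
      else if (j : ℕ) + 1 = 2 * n + 2 - α then
        z * v ⟨2 * n + 1 - α, by omega⟩ + v ⟨2 * n + 2 - α, by omega⟩
      else if (j : ℕ) + 1 = 2 * n + 3 - α then v ⟨2 * n + 1 - α, by omega⟩
      else v j := by
  have hsum : (v ᵥ* gMat n α z) j = ∑ m, v m * gMat n α z m j := rfl
  rw [hsum]
  by_cases h1 : (j : ℕ) + 1 = α
  · have hpt : ∀ m : Fin (2*n+2), v m * gMat n α z m j =
        (if m = (⟨α - 1, by omega⟩ : Fin (2*n+2)) then v m * (-z) else 0) +
          (if m = (⟨α, by omega⟩ : Fin (2*n+2)) then v m * 1 else 0) := by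
      intro m
      rw [gMat_apply_pos n α (by omega)]
      simp only [Fin.ext_iff]
      split_ifs <;> first | ring1 | (exfalso; omega)
    rw [Finset.sum_congr rfl (fun m _ => hpt m), sum_ind_two, if_pos h1]
    ring
  · rw [if_neg h1]
    by_cases h2 : (j : ℕ) + 1 = α + 1
    · have hpt : ∀ m : Fin (2*n+2), v m * gMat n α z m j =
          (if m = (⟨α - 1, by omega⟩ : Fin (2*n+2)) then v m * 1 else 0) := by
        intro m
        rw [gMat_apply_pos n α (by omega)]
        simp only [Fin.ext_iff]
        split_ifs <;> first | ring1 | (exfalso; omega)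
      rw [Finset.sum_congr rfl (fun m _ => hpt m), sum_ind_one, if_pos h2]
      ring
    · rw [if_neg h2]
      by_cases h3 : (j : ℕ) + 1 = 2 * n + 2 - α
      · have hpt : ∀ m : Fin (2*n+2), v m * gMat n α z m j =
            (if m = (⟨2*n+1-α, by omega⟩ : Fin (2*n+2)) then v m * z else 0) +
              (if m = (⟨2*n+2-α, by omega⟩ : Fin (2*n+2)) then v m * 1 else 0) := by
          intro m
          rw [gMat_apply_pos n α (by omega)]
          simp only [Fin.ext_iff]
          split_ifs <;> first | ring1 | (exfalso; omega)
        rw [Finset.sum_congr rfl (fun m _ => hpt m), sum_ind_two, if_pos h3]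
        ring
      · rw [if_neg h3]
        by_cases h4 : (j : ℕ) + 1 = 2 * n + 3 - α
        · have hpt : ∀ m : Fin (2*n+2), v m * gMat n α z m j =
              (if m = (⟨2*n+1-α, by omega⟩ : Fin (2*n+2)) then v m * 1 else 0) := by
            intro m
            rw [gMat_apply_pos n α (by omega)]
            simp only [Fin.ext_iff]
            split_ifs <;> first | ring1 | (exfalso; omega)
          rw [Finset.sum_congr rfl (fun m _ => hpt m), sum_ind_one, if_pos h4]
          ring
        · rw [if_neg h4]
          have hpt : ∀ m : Fin (2*n+2), v m * gMat n α z m j =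
              (if m = j then v m * 1 else 0) := by
            intro m
            rw [gMat_apply_pos n α (by omega)]
            simp only [Fin.ext_iff]
            split_ifs <;> first | ring1 | (exfalso; omega)
          rw [Finset.sum_congr rfl (fun m _ => hpt m), sum_ind_one]
          ring


def wProd (n : ℕ) (z : ℕ → R) : List ℕ → ℕ → Matrix (Fin (2*n+2)) (Fin (2*n+2)) R
  | [], _ => 1
  | a :: Q, s => gMat n a (z (s+1)) * wProd n z Q (s+1)

lemma ofFn_prod_eq_wProd (n : ℕ) (z : ℕ → R) (Q : List ℕ) (s : ℕ) :
    (List.ofFn fun l : Fin Q.length => gMat n (Q.get l) (z (s + (l : ℕ) + 1))).prod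
      = wProd n z Q s := by
  induction Q generalizing s with
  | nil => simp [wProd]
  | cons a Q ih =>
    rw [List.ofFn_succ, List.prod_cons]
    have h3 : ∀ i : Fin Q.length, (a :: Q).get i.succ = Q.get i := fun i => rfl
    have h4 : ((0 : Fin (Q.length + 1)) : ℕ) = 0 := rfl
    simp only [h3, h4, Fin.val_succ, List.get_cons_zero]
    have h2 : ∀ i : Fin Q.length, s + ((i:ℕ) + 1) + 1 = (s+1) + (i:ℕ) + 1 := fun i => by omega
    simp only [h2]
    rw [ih]
    rfl

lemma wProd_append (n : ℕ) (z : ℕ → R) (P Q : List ℕ) (s : ℕ) :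
    wProd n z (P ++ Q) s = wProd n z P s * wProd n z Q (s + P.length) := by
  induction P generalizing s with
  | nil => simp [wProd]
  | cons a P ih =>
    have e1 : wProd n z ((a :: P) ++ Q) s = gMat n a (z (s+1)) * wProd n z (P ++ Q) (s+1) := rfl
    have e2 : wProd n z (a :: P) s = gMat n a (z (s+1)) * wProd n z P (s+1) := rfl
    rw [e1, e2, ih, mul_assoc, List.length_cons,
      show s + (P.length + 1) = s + 1 + P.length from by omega]

lemma wProd_singleton (n : ℕ) (z : ℕ → R) (a s : ℕ) :
    wProd n z [a] s = gMat n a (z (s+1)) := by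
  simp [wProd]

lemma descWord_length (a b : ℕ) : (descWord a b).length = a + 1 - b := by
  simp [descWord]

lemma ascWord_length (a b : ℕ) : (ascWord a b).length = b + 1 - a := by
  simp [ascWord]

lemma descWord_concat (a b : ℕ) (h : b ≤ a) :
    descWord a b = descWord a (b+1) ++ [b] := by
  unfold descWord
  simp only [show a + 1 - b = (a - b) + 1 from by omega,
    show a + 1 - (b+1) = a - b from by omega, List.range_succ_eq_map,
    List.reverse_cons, List.map_append, List.map_reverse, List.map_map,
    List.map_cons, List.map_nil]
  congr 1
  · congr 1
    apply List.map_congr_left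
    intro x _
    simp only [Function.comp_apply]
    omega
  · simp

lemma ascWord_concat (m : ℕ) (h : 1 ≤ m) :
    ascWord 2 (m+1) = ascWord 2 m ++ [m+1] := by
  unfold ascWord
  rw [show m + 1 + 1 - 2 = (m - 1) + 1 by omega, List.range_succ, List.map_append,
    show m + 1 - 2 = m - 1 by omega]
  congr 1
  simp only [List.map_cons, List.map_nil]
  rw [show (m - 1) + 2 = m + 1 from by omega]

lemma descWord_nil (a : ℕ) : descWord a (a+1) = [] := by
  simp [descWord]

lemma ascWord_nil : ascWord 2 1 = [] := by
  simp [ascWord]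


lemma mul_row (A B : Matrix (Fin (2*n'+2)) (Fin (2*n'+2)) R) (a b : Fin (2*n'+2)) :
    (A * B) a b = ((A a) ᵥ* B) b := by
  simp [Matrix.mul_apply, Matrix.vecMul, dotProduct]

lemma rowD (n : ℕ) (z : ℕ → R) (i : ℕ) (hi1 : 1 ≤ i) (hi2 : i ≤ n) :
    ∀ k, k ≤ n → ∀ j : Fin (2*n+2),
      wProd n z (descWord n (n+1-k)) 0 ⟨i-1, by omega⟩ j =
        if i ≤ n - k then (if (j:ℕ) + 1 = i then 1 else 0)
        else if (j:ℕ) + 1 = n + 1 - k then -(z (n+1-i))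
        else if (j:ℕ) + 1 = i + 1 then 1 else 0 := by
  intro k
  induction k with
  | zero =>
    intro _ j
    rw [Nat.sub_zero, descWord_nil]
    show (1 : Matrix (Fin (2*n+2)) (Fin (2*n+2)) R) ⟨i-1, by omega⟩ j = _
    rw [Matrix.one_apply, if_pos (show i ≤ n - 0 by omega)]
    simp only [Fin.ext_iff]
    split_ifs <;> first | rfl | (exfalso; omega)
  | succ k ih =>
    intro hk j
    have hk' : k ≤ n := by omega
    have hrec : descWord n (n+1-(k+1)) = descWord n (n+1-k) ++ [n-k] := by
      rw [show n+1-(k+1) = n-k from by omega, descWord_concat n (n-k) (by omega),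
        show (n-k)+1 = n+1-k from by omega]
    rw [hrec, wProd_append, wProd_singleton, descWord_length,
      show n+1-(n+1-k) = k from by omega, mul_row,
      vecMul_gMat (show 1 ≤ n - k by omega) (show n - k ≤ n by omega)]
    simp only [ih hk', Nat.zero_add]
    split_ifs <;> first
      | rfl
      | ring1
      | (exfalso; omega)
      | (rw [show n + 1 - i = k + 1 from by omega]; ring1)


lemma rowA1 (n : ℕ) (z : ℕ → R) :
    ∀ k, k ≤ n - 1 → ∀ j : Fin (2*n+2),
      ((fun jj : Fin (2*n+2) => if (jj:ℕ) + 1 = 1 then (1:R) else 0) ᵥ*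
        wProd n z (ascWord 2 (k+1)) n) j = (if (j:ℕ) + 1 = 1 then 1 else 0) := by
  intro k
  induction k with
  | zero =>
    intro _ j
    rw [ascWord_nil]
    show ((fun jj : Fin (2*n+2) => if (jj:ℕ) + 1 = 1 then (1:R) else 0) ᵥ*
      (1 : Matrix (Fin (2*n+2)) (Fin (2*n+2)) R)) j = _
    rw [Matrix.vecMul_one]
  | succ k ih =>
    intro hk j
    rw [ascWord_concat (k+1) (by omega), wProd_append, wProd_singleton, ascWord_length,
      show n + (k+1+1-2) + 1 = n + k + 1 from by omega, ← Matrix.vecMul_vecMul,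
      vecMul_gMat (show 1 ≤ k + 2 by omega) (show k + 2 ≤ n by omega)]
    simp only [ih (by omega)]
    split_ifs <;> first | rfl | ring1 | (exfalso; omega)

lemma rowA2 (n : ℕ) (z : ℕ → R) :
    ∀ k, k ≤ n - 1 → ∀ j : Fin (2*n+2),
      ((fun jj : Fin (2*n+2) => if (jj:ℕ) + 1 = 2 then (1:R) else 0) ᵥ*
        wProd n z (ascWord 2 (k+1)) n) j =
      if 2 ≤ (j:ℕ) + 1 ∧ (j:ℕ) + 1 ≤ k + 1 then -(z (n + ((j:ℕ)+1) - 1))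
      else if (j:ℕ) + 1 = k + 2 then 1 else 0 := by
  intro k
  induction k with
  | zero =>
    intro _ j
    rw [ascWord_nil]
    show ((fun jj : Fin (2*n+2) => if (jj:ℕ) + 1 = 2 then (1:R) else 0) ᵥ*
      (1 : Matrix (Fin (2*n+2)) (Fin (2*n+2)) R)) j = _
    rw [Matrix.vecMul_one]
    split_ifs <;> first | rfl | (exfalso; omega)
  | succ k ih =>
    intro hk j
    rw [ascWord_concat (k+1) (by omega), wProd_append, wProd_singleton, ascWord_length,
      show n + (k+1+1-2) + 1 = n + k + 1 from by omega, ← Matrix.vecMul_vecMul,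
      vecMul_gMat (show 1 ≤ k + 2 by omega) (show k + 2 ≤ n by omega)]
    simp only [ih (by omega)]
    split_ifs <;> first
      | rfl
      | ring1
      | (exfalso; omega)
      | (rw [show n + ((j:ℕ) + 1) - 1 = n + k + 1 from by omega]; ring1)

lemma rowAj (n : ℕ) (z : ℕ → R) (j0 : ℕ) (hj0a : 3 ≤ j0) (hj0b : j0 ≤ n + 1) :
    ∀ k, k ≤ n - 1 → ∀ j : Fin (2*n+2),
      ((fun jj : Fin (2*n+2) => if (jj:ℕ) + 1 = j0 then (1:R) else 0) ᵥ*
        wProd n z (ascWord 2 (k+1)) n) j =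
      (if (j:ℕ) + 1 = (if j0 ≤ k + 2 then j0 - 1 else j0) then 1 else 0) := by
  intro k
  induction k with
  | zero =>
    intro _ j
    rw [ascWord_nil]
    show ((fun jj : Fin (2*n+2) => if (jj:ℕ) + 1 = j0 then (1:R) else 0) ᵥ*
      (1 : Matrix (Fin (2*n+2)) (Fin (2*n+2)) R)) j = _
    rw [Matrix.vecMul_one]
    split_ifs <;> first | rfl | (exfalso; omega)
  | succ k ih =>
    intro hk j
    rw [ascWord_concat (k+1) (by omega), wProd_append, wProd_singleton, ascWord_length,
      show n + (k+1+1-2) + 1 = n + k + 1 from by omega, ← Matrix.vecMul_vecMul,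
      vecMul_gMat (show 1 ≤ k + 2 by omega) (show k + 2 ≤ n by omega)]
    simp only [ih (by omega)]
    split_ifs <;> first | rfl | ring1 | (exfalso; omega)


lemma vecMul_lin (cst : R) (v w : Fin (2*n'+2) → R) (A : Matrix (Fin (2*n'+2)) (Fin (2*n'+2)) R)
    (x : Fin (2*n'+2)) :
    ((fun jj => cst * v jj + w jj) ᵥ* A) x = cst * (v ᵥ* A) x + (w ᵥ* A) x := by
  simp only [Matrix.vecMul, dotProduct, add_mul, mul_assoc, Finset.sum_add_distrib,
    Finset.mul_sum]

lemma MQ2_entry (n : ℕ) (hn : 2 ≤ n) (z : ℕ → R) (r c : Fin n) :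
    wProd n z (wordQ2 n) 0 ⟨(r:ℕ), by omega⟩ ⟨(c:ℕ)+1, Nat.succ_lt_succ (by omega)⟩ =
      if (r:ℕ) = 0 then (if (c:ℕ) = n - 1 then 1 else -(z (n + (c:ℕ) + 1)))
      else (if (c:ℕ) + 1 = (r:ℕ) then 1 else 0) := by
  have hsplit : wProd n z (wordQ2 n) 0
      = wProd n z (descWord n 1) 0 * wProd n z (ascWord 2 n) n := by
    rw [wordQ2, wProd_append, descWord_length, show 0 + (n + 1 - 1) = n from by omega]
  rw [hsplit, mul_row]
  have hD := rowD n z ((r:ℕ)+1) (by omega) (by omega) n (le_refl n)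
  have hDfun : (wProd n z (descWord n 1) 0 ⟨(r:ℕ), show (r:ℕ) < 2*n+2 by omega⟩)
      = fun jj : Fin (2*n+2) =>
        (-(z (n - (r:ℕ)))) * (if (jj:ℕ)+1 = 1 then 1 else 0)
          + (if (jj:ℕ)+1 = (r:ℕ)+2 then 1 else 0) := by
    funext jj
    have h2 : (⟨(r:ℕ), show (r:ℕ) < 2*n+2 by omega⟩ : Fin (2*n+2))
        = ⟨((r:ℕ)+1)-1, by omega⟩ := rfl
    rw [h2]
    rw [show descWord n 1 = descWord n (n+1-n) from by rw [show n+1-n = 1 from by omega]]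
    rw [hD jj]
    split_ifs <;> first
      | ring1
      | (exfalso; omega)
      | (rw [show n + 1 - ((r:ℕ)+1) = n - (r:ℕ) from by omega]; ring1)
  rw [hDfun]
  rw [show ascWord 2 n = ascWord 2 ((n-1)+1) from by rw [show (n-1)+1 = n from by omega]]
  rw [vecMul_lin]
  rw [rowA1 n z (n-1) (le_refl _)]
  by_cases hr : (r:ℕ) = 0
  · rw [show (r:ℕ)+2 = 2 from by omega]
    rw [rowA2 n z (n-1) (le_refl _)]
    simp only [Fin.val_mk]
    split_ifs <;> first
      | ring1
      | (exfalso; omega)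
      | (rw [show n + (((c:ℕ)+1) + 1) - 1 = n + (c:ℕ) + 1 from by omega]; ring1)
  · rw [rowAj n z ((r:ℕ)+2) (by omega) (by omega) (n-1) (le_refl _),
      if_pos (show (r:ℕ)+2 ≤ (n-1)+2 from by omega)]
    simp only [Fin.val_mk]
    split_ifs <;> first | ring1 | (exfalso; omega)

end Aux

lemma MQ_eq_wProd (n : ℕ) (Q : List ℕ) : MQ n Q = wProd n X Q 0 := by
  unfold MQ
  have h := ofFn_prod_eq_wProd n (fun i => (X i : MvPolynomial ℕ ℤ)) Q 0
  simpa using h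

lemma sigma_val (m : ℕ) (x : Fin (m+1)) :
    (((finRotate (m+1))⁻¹ x : Fin (m+1)) : ℕ) = if (x:ℕ) = 0 then m else (x:ℕ) - 1 := by
  have h1 : finRotate (m+1) ((finRotate (m+1))⁻¹ x) = x := Equiv.apply_symm_apply _ x
  rw [finRotate_succ_apply] at h1
  have h2 := Fin.val_add_one ((finRotate (m+1))⁻¹ x)
  rw [h1] at h2
  split_ifs at h2 with hl
  · rw [if_pos h2, hl, Fin.val_last]
  · rw [if_neg (show ¬(x:ℕ) = 0 from by omega)]
    omega

noncomputable def minorT (m : ℕ) : Matrix (Fin (m+1)) (Fin (m+1)) (MvPolynomial ℕ ℤ) :=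
  Matrix.of fun r c =>
    if (r:ℕ) = 0 then (if (c:ℕ) = m then 1 else -(X ((m+1) + (c:ℕ) + 1)))
    else (if (c:ℕ) + 1 = (r:ℕ) then 1 else 0)

lemma minorT_det (m : ℕ) : (minorT m).det = 1 ∨ (minorT m).det = -1 := by
  have hUT : ∀ r c : Fin (m+1), c < r → minorT m r ((finRotate (m+1))⁻¹ c) = 0 := by
    intro r c hlt
    have hr : (c:ℕ) < (r:ℕ) := hlt
    have hv := sigma_val m c
    by_cases hc0 : (c:ℕ) = 0
    · rw [if_pos hc0] at hv
      simp only [minorT, Matrix.of_apply]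
      split_ifs <;> first | rfl | (exfalso; omega)
    · rw [if_neg hc0] at hv
      simp only [minorT, Matrix.of_apply]
      split_ifs <;> first | rfl | (exfalso; omega)
  have hDiag : ∀ r : Fin (m+1), minorT m r ((finRotate (m+1))⁻¹ r) = 1 := by
    intro r
    have hv := sigma_val m r
    by_cases hr0 : (r:ℕ) = 0
    · rw [if_pos hr0] at hv
      simp only [minorT, Matrix.of_apply]
      split_ifs <;> first | rfl | (exfalso; omega)
    · rw [if_neg hr0] at hv
      simp only [minorT, Matrix.of_apply]
      split_ifs <;> first | rfl | (exfalso; omega)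
  have hdet1 : ((minorT m).submatrix id ((finRotate (m+1))⁻¹ :
      Equiv.Perm (Fin (m+1)))).det = 1 := by
    rw [Matrix.det_of_upperTriangular (by
      intro i j hij
      rw [Matrix.submatrix_apply]
      exact hUT i j hij)]
    apply Finset.prod_eq_one
    intro r _
    rw [Matrix.submatrix_apply]
    exact hDiag r
  have hperm := Matrix.det_permute' ((finRotate (m+1))⁻¹) (minorT m)
  rw [hdet1] at hperm
  rcases Int.units_eq_one_or (Equiv.Perm.sign ((finRotate (m+1))⁻¹)) with hs | hs <;>
    rw [hs] at hperm
  · left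
    simpa using hperm.symm
  · right
    simp only [Units.val_neg, Units.val_one, Int.cast_neg, Int.cast_one, neg_mul, one_mul] at hperm
    linear_combination hperm

/-- the `α = 0` case in the proof of Proposition 3: the determinant of
the submatrix of `M_{Q_2}` with rows `{1,…,n}` and columns `{2,…,n+1}` is `1` or `-1`. -/
theorem MQ_wordQ2_minor_isUnit (n : ℕ) (hn : 2 ≤ n) :
    let d : MvPolynomial ℕ ℤ :=
      ((MQ n (wordQ2 n)).submatrix
        (fun a : Fin n => (Fin.castLE (by omega) a : Fin (2 * n + 2)))
        (fun b : Fin n => (⟨(b : ℕ) + 1, by omega⟩ : Fin (2 * n + 2)))).det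
    d = 1 ∨ d = -1 := by
  intro d
  obtain ⟨m, rfl⟩ : ∃ m, n = m + 1 := ⟨n - 1, by omega⟩
  have hd : d = ((MQ (m+1) (wordQ2 (m+1))).submatrix
      (fun a : Fin (m+1) => (Fin.castLE (show m+1 ≤ 2*(m+1)+2 by omega) a : Fin (2*(m+1)+2)))
      (fun b : Fin (m+1) => (⟨(b : ℕ) + 1, show (b:ℕ)+1 < 2*(m+1)+2 by omega⟩ :
        Fin (2*(m+1)+2)))).det := rfl
  rw [hd]
  have hsub : (MQ (m+1) (wordQ2 (m+1))).submatrix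
      (fun a : Fin (m+1) => (Fin.castLE (show m+1 ≤ 2*(m+1)+2 by omega) a : Fin (2*(m+1)+2)))
      (fun b : Fin (m+1) => (⟨(b : ℕ) + 1, show (b:ℕ)+1 < 2*(m+1)+2 by omega⟩ :
        Fin (2*(m+1)+2))) = minorT m := by
    ext r c
    rw [Matrix.submatrix_apply, MQ_eq_wProd]
    have hc1 : (Fin.castLE (show m+1 ≤ 2*(m+1)+2 by omega) r)
        = (⟨(r:ℕ), show (r:ℕ) < 2*(m+1)+2 by omega⟩ : Fin (2*(m+1)+2)) := rfl
    rw [hc1, MQ2_entry (m+1) hn X r c]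
    simp only [minorT, Matrix.of_apply]
    split_ifs <;> first | rfl | (exfalso; omega)
  rw [hsub]
  exact minorT_det m
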